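/- Let r ≥ 1 be an integer, z ∈ ℂ, and ħ, η nonzero real numbers. Let V = ℂ^{r+1} with basis v_0, …, v_r. For l ∈ {1, …, r} and u ∈ ℂ with sinh(πη(u − z − (r−l)iħ/2)) ≠ 0, define linear operators on V by: e⁺_l(u)·v_j = δ_{l,j}·[−sinh(iπηħ)/sinh(πη(u − z − (r−l)iħ/2))]·v_{j−1}; f⁺_l(u)·v_{j−1} = δ_{l,j}·[−sinh(iπηħ)/sinh(πη(u − z − (r−l)iħ/2))]·v_j; and H⁺_l(u)·v_j = [δ_{l,j}·sinh(πη(u − z − (r−l−2)iħ/2))/sinh(πη(u − z − (r−l)iħ/2)) + δ_{l−1,j}·sinh(πη(u − z − (r−l+2)iħ/2))/sinh(πη(u − z − (r−l)iħ/2)) + (1 − δ_{l,j} − δ_{l−1,j})]·v_j. Then for all l, m ∈ {1, …, r} and all u, v ∈ ℂ such that the relevant denominators are nonzero and sinh(πη(u − v)) ≠ 0, the commutator satisfies e⁺_l(u)f⁺_m(v) − f⁺_m(v)e⁺_l(u) = δ_{l,m}·[sinh(iπηħ)/sinh(πη(u − v))]·(H⁺_l(u) − H⁺_l(v)). -/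
import Mathlib


private lemma sinh_key1 (X Y c : ℂ) (hX : Complex.sinh X ≠ 0) (hY : Complex.sinh Y ≠ 0)
    (hW : Complex.sinh (X - Y) ≠ 0) :
    -Complex.sinh c / Complex.sinh X * (-Complex.sinh c / Complex.sinh Y) =
      Complex.sinh c / Complex.sinh (X - Y) *
        (Complex.sinh (X - c) / Complex.sinh X - Complex.sinh (Y - c) / Complex.sinh Y) := by
  field_simp
  rw [Complex.sinh_sub X Y, Complex.sinh_sub X c, Complex.sinh_sub Y c]
  ring

private lemma sinh_key2 (X Y c : ℂ) (hX : Complex.sinh X ≠ 0) (hY : Complex.sinh Y ≠ 0)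
    (hW : Complex.sinh (X - Y) ≠ 0) :
    -(-Complex.sinh c / Complex.sinh Y * (-Complex.sinh c / Complex.sinh X)) =
      Complex.sinh c / Complex.sinh (X - Y) *
        (Complex.sinh (X + c) / Complex.sinh X - Complex.sinh (Y + c) / Complex.sinh Y) := by
  field_simp
  rw [Complex.sinh_sub X Y, Complex.sinh_add X c, Complex.sinh_add Y c]
  ring



/-- The positive half-current `e⁺_l(u)` of the `(r+1)`-dimensional evaluation
representation of `A_{ħ,η}(ŝl_{r+1})` at `c = 0`, as a matrix acting on the basis
`v_0, …, v_r` by `e⁺_l(u)·v_j = δ_{l,j}·[−sinh(iπηħ)/sinh(πη(u − z − (r−l)iħ/2))]·v_{j−1}`. -/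
noncomputable def evalE (r : ℕ) (z : ℂ) (hbar η : ℝ) (l : ℕ) (u : ℂ) :
    Matrix (Fin (r + 1)) (Fin (r + 1)) ℂ := fun j' j =>
  if (j : ℕ) = l ∧ (j' : ℕ) + 1 = l then
    -Complex.sinh (Complex.I * (Real.pi : ℂ) * (η : ℂ) * (hbar : ℂ)) /
      Complex.sinh ((Real.pi : ℂ) * (η : ℂ) *
        (u - z - ((r : ℂ) - (l : ℂ)) * Complex.I * (hbar : ℂ) / 2))
  else 0

/-- The positive half-current `f⁺_l(u)`, acting by
`f⁺_l(u)·v_{j−1} = δ_{l,j}·[−sinh(iπηħ)/sinh(πη(u − z − (r−l)iħ/2))]·v_j`. -/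
noncomputable def evalF (r : ℕ) (z : ℂ) (hbar η : ℝ) (l : ℕ) (u : ℂ) :
    Matrix (Fin (r + 1)) (Fin (r + 1)) ℂ := fun j' j =>
  if (j : ℕ) + 1 = l ∧ (j' : ℕ) = l then
    -Complex.sinh (Complex.I * (Real.pi : ℂ) * (η : ℂ) * (hbar : ℂ)) /
      Complex.sinh ((Real.pi : ℂ) * (η : ℂ) *
        (u - z - ((r : ℂ) - (l : ℂ)) * Complex.I * (hbar : ℂ) / 2))
  else 0

/-- The positive half-current `H⁺_l(u)`, acting diagonally by
`H⁺_l(u)·v_j = [δ_{l,j}·sinh(πη(u−z−(r−l−2)iħ/2))/sinh(πη(u−z−(r−l)iħ/2))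
 + δ_{l−1,j}·sinh(πη(u−z−(r−l+2)iħ/2))/sinh(πη(u−z−(r−l)iħ/2))
 + (1 − δ_{l,j} − δ_{l−1,j})]·v_j`. -/
noncomputable def evalH (r : ℕ) (z : ℂ) (hbar η : ℝ) (l : ℕ) (u : ℂ) :
    Matrix (Fin (r + 1)) (Fin (r + 1)) ℂ := fun j' j =>
  if j' = j then
    (if (j : ℕ) = l then (1 : ℂ) else 0) *
        (Complex.sinh ((Real.pi : ℂ) * (η : ℂ) *
            (u - z - ((r : ℂ) - (l : ℂ) - 2) * Complex.I * (hbar : ℂ) / 2)) /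
          Complex.sinh ((Real.pi : ℂ) * (η : ℂ) *
            (u - z - ((r : ℂ) - (l : ℂ)) * Complex.I * (hbar : ℂ) / 2))) +
      (if (j : ℕ) + 1 = l then (1 : ℂ) else 0) *
        (Complex.sinh ((Real.pi : ℂ) * (η : ℂ) *
            (u - z - ((r : ℂ) - (l : ℂ) + 2) * Complex.I * (hbar : ℂ) / 2)) /
          Complex.sinh ((Real.pi : ℂ) * (η : ℂ) *
            (u - z - ((r : ℂ) - (l : ℂ)) * Complex.I * (hbar : ℂ) / 2))) +
      (1 - (if (j : ℕ) = l then (1 : ℂ) else 0) -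
        (if (j : ℕ) + 1 = l then (1 : ℂ) else 0))
  else 0

/-- the Ding–Frenkel-type commutation relation
`[e⁺_l(u), f⁺_m(v)] = δ_{l,m}·[sinh(iπηħ)/sinh(πη(u − v))]·(H⁺_l(u) − H⁺_l(v))`
holds in the `(r+1)`-dimensional evaluation representation of `A_{ħ,η}(ŝl_{r+1})`. -/
theorem eval_rep_EF_commutator (r : ℕ) (hr : 1 ≤ r) (z : ℂ) (hbar η : ℝ)
    (hhbar : hbar ≠ 0) (hη : η ≠ 0) (l m : ℕ)
    (hl1 : 1 ≤ l) (hlr : l ≤ r) (hm1 : 1 ≤ m) (hmr : m ≤ r) (u v : ℂ)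
    (h1 : Complex.sinh ((Real.pi : ℂ) * (η : ℂ) *
      (u - z - ((r : ℂ) - (l : ℂ)) * Complex.I * (hbar : ℂ) / 2)) ≠ 0)
    (h2 : Complex.sinh ((Real.pi : ℂ) * (η : ℂ) *
      (v - z - ((r : ℂ) - (l : ℂ)) * Complex.I * (hbar : ℂ) / 2)) ≠ 0)
    (h3 : Complex.sinh ((Real.pi : ℂ) * (η : ℂ) *
      (v - z - ((r : ℂ) - (m : ℂ)) * Complex.I * (hbar : ℂ) / 2)) ≠ 0)
    (h4 : Complex.sinh ((Real.pi : ℂ) * (η : ℂ) * (u - v)) ≠ 0) :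
    evalE r z hbar η l u * evalF r z hbar η m v -
        evalF r z hbar η m v * evalE r z hbar η l u =
      ((if l = m then (1 : ℂ) else 0) *
          (Complex.sinh (Complex.I * (Real.pi : ℂ) * (η : ℂ) * (hbar : ℂ)) /
            Complex.sinh ((Real.pi : ℂ) * (η : ℂ) * (u - v)))) •
        (evalH r z hbar η l u - evalH r z hbar η l v) := by
  have hl' : l < r + 1 := by omega
  have hl1' : l - 1 < r + 1 := by omega
  ext i j
  simp only [Matrix.sub_apply, Matrix.mul_apply, Matrix.smul_apply,
    evalE, evalF, evalH, smul_eq_mul]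
  by_cases hlm : l = m
  · subst hlm
    rw [if_pos (rfl : l = l)]
    by_cases hij : i = j
    · subst hij
      rw [if_pos (rfl : i = i), if_pos (rfl : i = i)]
      by_cases hjl : (i : ℕ) = l
      · have hjl1 : ¬ ((i : ℕ) + 1 = l) := by omega
        rw [Finset.sum_eq_zero (fun k _ => by
          split_ifs with hA hB <;> first | (exfalso; omega) | simp)]
        rw [Fintype.sum_eq_single (⟨l - 1, hl1'⟩ : Fin (r + 1)) (fun k hk => by
          have hk' : (k : ℕ) ≠ l - 1 := fun h => hk (Fin.ext h)
          split_ifs with hA hB <;> first | (exfalso; omega) | simp)]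
        have hkl : ((⟨l - 1, hl1'⟩ : Fin (r + 1)) : ℕ) + 1 = l := by
          show l - 1 + 1 = l; omega
        rw [if_pos ⟨hkl, hjl⟩, if_pos ⟨hjl, hkl⟩, if_pos hjl, if_neg hjl1]
        rw [show ((Real.pi : ℂ) * (η : ℂ) * (u - v)) =
          ((Real.pi : ℂ) * (η : ℂ) * (u - z - ((r : ℂ) - (l : ℂ)) * Complex.I * (hbar : ℂ) / 2))
          - ((Real.pi : ℂ) * (η : ℂ) * (v - z - ((r : ℂ) - (l : ℂ)) * Complex.I * (hbar : ℂ) / 2))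
          from by ring] at h4 ⊢
        rw [show ((Real.pi : ℂ) * (η : ℂ) *
            (u - z - ((r : ℂ) - (l : ℂ) - 2) * Complex.I * (hbar : ℂ) / 2)) =
          ((Real.pi : ℂ) * (η : ℂ) * (u - z - ((r : ℂ) - (l : ℂ)) * Complex.I * (hbar : ℂ) / 2))
          + (Complex.I * (Real.pi : ℂ) * (η : ℂ) * (hbar : ℂ)) from by ring]
        rw [show ((Real.pi : ℂ) * (η : ℂ) *
            (v - z - ((r : ℂ) - (l : ℂ) - 2) * Complex.I * (hbar : ℂ) / 2)) =
          ((Real.pi : ℂ) * (η : ℂ) * (v - z - ((r : ℂ) - (l : ℂ)) * Complex.I * (hbar : ℂ) / 2))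
          + (Complex.I * (Real.pi : ℂ) * (η : ℂ) * (hbar : ℂ)) from by ring]
        have key := sinh_key2 _ _ (Complex.I * (Real.pi : ℂ) * (η : ℂ) * (hbar : ℂ)) h1 h2 h4
        linear_combination key
      · by_cases hjl1 : (i : ℕ) + 1 = l
        · rw [Fintype.sum_eq_single (⟨l, hl'⟩ : Fin (r + 1)) (fun k hk => by
            have hk' : (k : ℕ) ≠ l := fun h => hk (Fin.ext h)
            split_ifs with hA hB <;> first | (exfalso; omega) | simp)]
          rw [Finset.sum_eq_zero (fun k _ => by
            split_ifs with hA hB <;> first | (exfalso; omega) | simp)]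
          rw [if_pos ⟨(rfl : ((⟨l, hl'⟩ : Fin (r + 1)) : ℕ) = l), hjl1⟩,
            if_pos ⟨hjl1, (rfl : ((⟨l, hl'⟩ : Fin (r + 1)) : ℕ) = l)⟩,
            if_neg hjl, if_pos hjl1]
          rw [show ((Real.pi : ℂ) * (η : ℂ) * (u - v)) =
            ((Real.pi : ℂ) * (η : ℂ) * (u - z - ((r : ℂ) - (l : ℂ)) * Complex.I * (hbar : ℂ) / 2))
            - ((Real.pi : ℂ) * (η : ℂ) * (v - z - ((r : ℂ) - (l : ℂ)) * Complex.I * (hbar : ℂ) / 2))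
            from by ring] at h4 ⊢
          rw [show ((Real.pi : ℂ) * (η : ℂ) *
              (u - z - ((r : ℂ) - (l : ℂ) + 2) * Complex.I * (hbar : ℂ) / 2)) =
            ((Real.pi : ℂ) * (η : ℂ) * (u - z - ((r : ℂ) - (l : ℂ)) * Complex.I * (hbar : ℂ) / 2))
            - (Complex.I * (Real.pi : ℂ) * (η : ℂ) * (hbar : ℂ)) from by ring]
          rw [show ((Real.pi : ℂ) * (η : ℂ) *
              (v - z - ((r : ℂ) - (l : ℂ) + 2) * Complex.I * (hbar : ℂ) / 2)) =
            ((Real.pi : ℂ) * (η : ℂ) * (v - z - ((r : ℂ) - (l : ℂ)) * Complex.I * (hbar : ℂ) / 2))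
            - (Complex.I * (Real.pi : ℂ) * (η : ℂ) * (hbar : ℂ)) from by ring]
          have key := sinh_key1 _ _ (Complex.I * (Real.pi : ℂ) * (η : ℂ) * (hbar : ℂ)) h1 h2 h4
          linear_combination key
        · rw [Finset.sum_eq_zero (fun k _ => by
            split_ifs with hA hB <;> first | (exfalso; omega) | simp)]
          rw [Finset.sum_eq_zero (fun k _ => by
            split_ifs with hA hB <;> first | (exfalso; omega) | simp)]
          rw [if_neg hjl, if_neg hjl1]
          ring
    · rw [Finset.sum_eq_zero (fun k _ => by
        split_ifs with hA hB
        · exact absurd (Fin.ext (by omega : (i : ℕ) = (j : ℕ))) hij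
        all_goals simp)]
      rw [Finset.sum_eq_zero (fun k _ => by
        split_ifs with hA hB
        · exact absurd (Fin.ext (by omega : (i : ℕ) = (j : ℕ))) hij
        all_goals simp)]
      rw [if_neg hij, if_neg hij]
      ring
  · rw [Finset.sum_eq_zero (fun k _ => by
      split_ifs with hA hB <;> first | (exfalso; omega) | simp)]
    rw [Finset.sum_eq_zero (fun k _ => by
      split_ifs with hA hB <;> first | (exfalso; omega) | simp)]
    rw [if_neg hlm]
    ring
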